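/- For every odd positive integer n, ∫_0^{1/2} ∫_0^x (x² − y²) · ( c_n(y,x) − c_n(x,y) ) dy dx = (sin(nπ/2)/π^4) · ( 4·sinh(nπ/2)/n^4 − π·cosh(nπ/2)/n^3 ), where c_n(x,y) := cos(nπx)·cosh(nπy). -/

import Mathlib

open Real intervalIntegral

/-- `c_n(x,y) = cos(nπx)·cosh(nπy)`. -/
noncomputable def cfun (n : ℕ) (x y : ℝ) : ℝ :=
  Real.cos ((n : ℝ) * Real.pi * x) * Real.cosh ((n : ℝ) * Real.pi * y)

private lemma keyY (a x : ℝ) (y : ℝ) :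
    HasDerivAt (fun y : ℝ =>
      Real.cosh (a*x) * ((x^2 - y^2) * Real.sin (a*y)/a - 2*y*Real.cos (a*y)/a^2
          + 2*Real.sin (a*y)/a^3)
      - Real.cos (a*x) * ((x^2 - y^2) * Real.sinh (a*y)/a + 2*y*Real.cosh (a*y)/a^2
          - 2*Real.sinh (a*y)/a^3))
      (Real.cosh (a*x) * ((-(2*y)) * Real.sin (a*y)/a + (x^2-y^2)*(Real.cos (a*y)*a)/a
          - (2*Real.cos (a*y) + 2*y*(-Real.sin (a*y)*a))/a^2 + 2*(Real.cos (a*y)*a)/a^3)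
       - Real.cos (a*x) * ((-(2*y)) * Real.sinh (a*y)/a + (x^2-y^2)*(Real.cosh (a*y)*a)/a
          + (2*Real.cosh (a*y) + 2*y*(Real.sinh (a*y)*a))/a^2 - 2*(Real.cosh (a*y)*a)/a^3)) y := by
  have hy : HasDerivAt (fun y : ℝ => a*y) a y := by
    simpa using (hasDerivAt_id y).const_mul a
  have hsin : HasDerivAt (fun y : ℝ => Real.sin (a*y)) (Real.cos (a*y)*a) y := hy.sin
  have hcos : HasDerivAt (fun y : ℝ => Real.cos (a*y)) (-Real.sin (a*y)*a) y := hy.cos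
  have hsinh : HasDerivAt (fun y : ℝ => Real.sinh (a*y)) (Real.cosh (a*y)*a) y := hy.sinh
  have hcosh : HasDerivAt (fun y : ℝ => Real.cosh (a*y)) (Real.sinh (a*y)*a) y := hy.cosh
  have hsq : HasDerivAt (fun y : ℝ => x^2 - y^2) (-(2*y)) y := by
    simpa using (hasDerivAt_pow 2 y).const_sub (x^2)
  have h2y : HasDerivAt (fun y : ℝ => 2*y) 2 y := by
    simpa using (hasDerivAt_id y).const_mul (2:ℝ)
  have hA : HasDerivAt (fun y : ℝ => (x^2 - y^2) * Real.sin (a*y)/a - 2*y*Real.cos (a*y)/a^2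
        + 2*Real.sin (a*y)/a^3)
      ((-(2*y)) * Real.sin (a*y)/a + (x^2-y^2)*(Real.cos (a*y)*a)/a
        - (2*Real.cos (a*y) + 2*y*(-Real.sin (a*y)*a))/a^2 + 2*(Real.cos (a*y)*a)/a^3) y := by
    have t1 := (hsq.mul hsin).div_const a
    have t2 := (h2y.mul hcos).div_const (a^2)
    have t3 := (hsin.const_mul (2:ℝ)).div_const (a^3)
    have := (t1.sub t2).add t3
    exact this.congr_deriv (by ring)
  have hB : HasDerivAt (fun y : ℝ => (x^2 - y^2) * Real.sinh (a*y)/a + 2*y*Real.cosh (a*y)/a^2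
        - 2*Real.sinh (a*y)/a^3)
      ((-(2*y)) * Real.sinh (a*y)/a + (x^2-y^2)*(Real.cosh (a*y)*a)/a
        + (2*Real.cosh (a*y) + 2*y*(Real.sinh (a*y)*a))/a^2 - 2*(Real.cosh (a*y)*a)/a^3) y := by
    have t1 := (hsq.mul hsinh).div_const a
    have t2 := (h2y.mul hcosh).div_const (a^2)
    have t3 := (hsinh.const_mul (2:ℝ)).div_const (a^3)
    have := (t1.add t2).sub t3
    exact this.congr_deriv (by ring)
  exact (hA.const_mul (Real.cosh (a*x))).sub (hB.const_mul (Real.cos (a*x)))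

private lemma inner_eq (a x : ℝ) (ha : a ≠ 0) :
    (∫ y in (0:ℝ)..x,
        (x ^ 2 - y ^ 2) * (Real.cos (a*y) * Real.cosh (a*x) - Real.cos (a*x) * Real.cosh (a*y)))
    = -4*x*Real.cos (a*x)*Real.cosh (a*x)/a^2 + 2*Real.sin (a*x)*Real.cosh (a*x)/a^3
        + 2*Real.cos (a*x)*Real.sinh (a*x)/a^3 := by
  have hderiv : ∀ z ∈ Set.uIcc (0:ℝ) x,
      HasDerivAt (fun y : ℝ =>
        Real.cosh (a*x) * ((x^2 - y^2) * Real.sin (a*y)/a - 2*y*Real.cos (a*y)/a^2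
            + 2*Real.sin (a*y)/a^3)
        - Real.cos (a*x) * ((x^2 - y^2) * Real.sinh (a*y)/a + 2*y*Real.cosh (a*y)/a^2
            - 2*Real.sinh (a*y)/a^3))
        ((x ^ 2 - z ^ 2) * (Real.cos (a*z) * Real.cosh (a*x) - Real.cos (a*x) * Real.cosh (a*z))) z := by
    intro z _
    have := keyY a x z
    convert this using 1
    field_simp
    ring
  have hint : IntervalIntegrable (fun y : ℝ =>
      (x ^ 2 - y ^ 2) * (Real.cos (a*y) * Real.cosh (a*x) - Real.cos (a*x) * Real.cosh (a*y)))
      MeasureTheory.volume 0 x := by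
    apply Continuous.intervalIntegrable
    fun_prop
  rw [intervalIntegral.integral_eq_sub_of_hasDerivAt hderiv hint]
  simp only [Real.sin_zero, Real.cos_zero, Real.sinh_zero, Real.cosh_zero, mul_zero, zero_mul]
  field_simp
  ring

private lemma keyX (a : ℝ) (x : ℝ) :
    HasDerivAt (fun x : ℝ =>
      -2*x*(Real.sin (a*x)*Real.cosh (a*x) + Real.cos (a*x)*Real.sinh (a*x))/a^3
        + 4*Real.sin (a*x)*Real.sinh (a*x)/a^4)
      ((-2*(Real.sin (a*x)*Real.cosh (a*x) + Real.cos (a*x)*Real.sinh (a*x))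
          + (-2*x)*((Real.cos (a*x)*a)*Real.cosh (a*x) + Real.sin (a*x)*(Real.sinh (a*x)*a)
            + ((-Real.sin (a*x)*a)*Real.sinh (a*x) + Real.cos (a*x)*(Real.cosh (a*x)*a))))/a^3
        + (4*(Real.cos (a*x)*a)*Real.sinh (a*x) + 4*Real.sin (a*x)*(Real.cosh (a*x)*a))/a^4) x := by
  have hx : HasDerivAt (fun x : ℝ => a*x) a x := by
    simpa using (hasDerivAt_id x).const_mul a
  have hsin : HasDerivAt (fun x : ℝ => Real.sin (a*x)) (Real.cos (a*x)*a) x := hx.sin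
  have hcos : HasDerivAt (fun x : ℝ => Real.cos (a*x)) (-Real.sin (a*x)*a) x := hx.cos
  have hsinh : HasDerivAt (fun x : ℝ => Real.sinh (a*x)) (Real.cosh (a*x)*a) x := hx.sinh
  have hcosh : HasDerivAt (fun x : ℝ => Real.cosh (a*x)) (Real.sinh (a*x)*a) x := hx.cosh
  have hm2x : HasDerivAt (fun x : ℝ => -2*x) (-2) x := by
    simpa using (hasDerivAt_id x).const_mul (-2:ℝ)
  have hS : HasDerivAt (fun x : ℝ => Real.sin (a*x)*Real.cosh (a*x) + Real.cos (a*x)*Real.sinh (a*x))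
      ((Real.cos (a*x)*a)*Real.cosh (a*x) + Real.sin (a*x)*(Real.sinh (a*x)*a)
        + ((-Real.sin (a*x)*a)*Real.sinh (a*x) + Real.cos (a*x)*(Real.cosh (a*x)*a))) x :=
    (hsin.mul hcosh).add (hcos.mul hsinh)
  have t1 := (hm2x.mul hS).div_const (a^3)
  have t2 := ((hsin.const_mul (4:ℝ)).mul hsinh).div_const (a^4)
  exact t1.add t2

private lemma outer_eq (a : ℝ) (ha : a ≠ 0) :
    (∫ x in (0:ℝ)..(1/2),
        (-4*x*Real.cos (a*x)*Real.cosh (a*x)/a^2 + 2*Real.sin (a*x)*Real.cosh (a*x)/a^3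
          + 2*Real.cos (a*x)*Real.sinh (a*x)/a^3))
    = -2*(1/2)*(Real.sin (a*(1/2))*Real.cosh (a*(1/2)) + Real.cos (a*(1/2))*Real.sinh (a*(1/2)))/a^3
        + 4*Real.sin (a*(1/2))*Real.sinh (a*(1/2))/a^4 := by
  have hderiv : ∀ z ∈ Set.uIcc (0:ℝ) (1/2),
      HasDerivAt (fun x : ℝ =>
        -2*x*(Real.sin (a*x)*Real.cosh (a*x) + Real.cos (a*x)*Real.sinh (a*x))/a^3
          + 4*Real.sin (a*x)*Real.sinh (a*x)/a^4)
        (-4*z*Real.cos (a*z)*Real.cosh (a*z)/a^2 + 2*Real.sin (a*z)*Real.cosh (a*z)/a^3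
          + 2*Real.cos (a*z)*Real.sinh (a*z)/a^3) z := by
    intro z _
    have := keyX a z
    convert this using 1
    field_simp
    ring
  have hint : IntervalIntegrable (fun x : ℝ =>
      -4*x*Real.cos (a*x)*Real.cosh (a*x)/a^2 + 2*Real.sin (a*x)*Real.cosh (a*x)/a^3
        + 2*Real.cos (a*x)*Real.sinh (a*x)/a^3) MeasureTheory.volume 0 (1/2) := by
    apply Continuous.intervalIntegrable
    fun_prop
  rw [intervalIntegral.integral_eq_sub_of_hasDerivAt hderiv hint]
  simp only [mul_zero, Real.sin_zero, Real.sinh_zero, zero_mul, mul_zero]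
  ring

/-- For every odd positive integer `n`,
`∫_0^{1/2}∫_0^x (x²−y²)(c_n(y,x)−c_n(x,y)) dy dx
  = (sin(nπ/2)/π^4)·(4sinh(nπ/2)/n^4 − πcosh(nπ/2)/n^3)`. -/
theorem I_n2_eval :
    ∀ n : ℕ, Odd n →
      (∫ x in (0:ℝ)..(1/2), ∫ y in (0:ℝ)..x,
          (x ^ 2 - y ^ 2) * (cfun n y x - cfun n x y))
        = (Real.sin ((n : ℝ) * Real.pi / 2) / Real.pi ^ 4) *
            (4 * Real.sinh ((n : ℝ) * Real.pi / 2) / (n : ℝ) ^ 4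
              - Real.pi * Real.cosh ((n : ℝ) * Real.pi / 2) / (n : ℝ) ^ 3) := by
  intro n hn
  have hn0 : (n : ℝ) ≠ 0 := Nat.cast_ne_zero.mpr hn.pos.ne'
  have ha : (n : ℝ) * Real.pi ≠ 0 := mul_ne_zero hn0 Real.pi_ne_zero
  have h1 : ∀ x : ℝ, (∫ y in (0:ℝ)..x, (x ^ 2 - y ^ 2) * (cfun n y x - cfun n x y))
      = -4*x*Real.cos ((n:ℝ)*Real.pi*x)*Real.cosh ((n:ℝ)*Real.pi*x)/((n:ℝ)*Real.pi)^2
        + 2*Real.sin ((n:ℝ)*Real.pi*x)*Real.cosh ((n:ℝ)*Real.pi*x)/((n:ℝ)*Real.pi)^3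
        + 2*Real.cos ((n:ℝ)*Real.pi*x)*Real.sinh ((n:ℝ)*Real.pi*x)/((n:ℝ)*Real.pi)^3 := by
    intro x
    have := inner_eq ((n:ℝ)*Real.pi) x ha
    simpa [cfun, mul_assoc] using this
  rw [intervalIntegral.integral_congr (g := fun x : ℝ =>
      -4*x*Real.cos ((n:ℝ)*Real.pi*x)*Real.cosh ((n:ℝ)*Real.pi*x)/((n:ℝ)*Real.pi)^2
        + 2*Real.sin ((n:ℝ)*Real.pi*x)*Real.cosh ((n:ℝ)*Real.pi*x)/((n:ℝ)*Real.pi)^3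
        + 2*Real.cos ((n:ℝ)*Real.pi*x)*Real.sinh ((n:ℝ)*Real.pi*x)/((n:ℝ)*Real.pi)^3)
      (fun x _ => h1 x)]
  rw [outer_eq ((n:ℝ)*Real.pi) ha]
  have harg : (n:ℝ)*Real.pi*(1/2) = (n:ℝ)*Real.pi/2 := by ring
  rw [harg]
  have hc : Real.cos ((n:ℝ)*Real.pi/2) = 0 := by
    obtain ⟨k, hk⟩ := hn
    subst hk
    push_cast
    have : ((2*(k:ℝ)+1))*Real.pi/2 = (k:ℝ)*Real.pi + Real.pi/2 := by ring
    rw [this, Real.cos_add, Real.cos_pi_div_two, Real.sin_pi_div_two, Real.sin_nat_mul_pi]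
    ring
  rw [hc]
  field_simp
  ring
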